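/- arXiv:2011.05635 — 4 statements merged into one kernel-verified Lean document; each statement's English description precedes it below -/
import Mathlib

section
/- Let a, b be real numbers with b ≠ 0, and define F(ξ) = (3a²/(2b)) (1 + tanh(aξ/2))². Then F satisfies the second-order ODE F''(ξ) = b F(ξ)² − 6a² F(ξ) + 5a F'(ξ) for all ξ ∈ ℝ. -/
open Real

lemma tanh_hasDerivAt (x : ℝ) : HasDerivAt Real.tanh (1 - Real.tanh x ^ 2) x := by
  have hc : Real.cosh x ≠ 0 := (Real.cosh_pos x).ne'
  have h := (Real.hasDerivAt_sinh x).div (Real.hasDerivAt_cosh x) hc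
  have hfun : Real.tanh = fun y => Real.sinh y / Real.cosh y :=
    funext fun y => Real.tanh_eq_sinh_div_cosh y
  have hid := Real.cosh_sq_sub_sinh_sq x
  have h' : HasDerivAt (fun y => Real.sinh y / Real.cosh y)
      (1 - (Real.sinh x / Real.cosh x) ^ 2) x := by
    refine h.congr_deriv ?_
    field_simp
  rw [Real.tanh_eq_sinh_div_cosh x, hfun]
  exact h'

lemma inner_hasDerivAt (a x : ℝ) :
    HasDerivAt (fun y : ℝ => Real.tanh (a * y / 2))
      ((1 - Real.tanh (a * x / 2) ^ 2) * (a / 2)) x := by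
  have h1 : HasDerivAt (fun y : ℝ => a * y / 2) (a / 2) x := by
    simpa using ((hasDerivAt_id x).const_mul a).div_const 2
  exact (tanh_hasDerivAt (a * x / 2)).comp x h1

theorem aux_ode_tanh_solution
    (a b : ℝ) (hb : b ≠ 0) (F : ℝ → ℝ)
    (hF : ∀ ξ, F ξ = 3 * a ^ 2 / (2 * b) * (1 + Real.tanh (a * ξ / 2)) ^ 2)
    (ξ : ℝ) :
    deriv (deriv F) ξ = b * F ξ ^ 2 - 6 * a ^ 2 * F ξ + 5 * a * deriv F ξ := by
  set C := 3 * a ^ 2 / (2 * b) with hC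
  have hFfun : F = fun y => C * (1 + Real.tanh (a * y / 2)) ^ 2 := funext hF
  have hF' : ∀ x : ℝ, HasDerivAt F
      (C * (2 * (1 + Real.tanh (a * x / 2)) * ((1 - Real.tanh (a * x / 2) ^ 2) * (a / 2)))) x := by
    intro x
    rw [hFfun]
    have := (((inner_hasDerivAt a x).const_add 1).pow 2).const_mul C
    refine this.congr_deriv ?_
    push_cast
    ring
  have hderivF : deriv F = fun x => (2 * C) *
      ((1 + Real.tanh (a * x / 2)) * ((1 - Real.tanh (a * x / 2) ^ 2) * (a / 2))) :=
    funext fun x => by rw [(hF' x).deriv]; ring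
  have h1 : HasDerivAt (fun x => (1 + Real.tanh (a * x / 2)))
      ((1 - Real.tanh (a * ξ / 2) ^ 2) * (a / 2)) ξ :=
    (inner_hasDerivAt a ξ).const_add 1
  have h2 : HasDerivAt (fun x => (1 - Real.tanh (a * x / 2) ^ 2) * (a / 2))
      ((-(2 * Real.tanh (a * ξ / 2) * ((1 - Real.tanh (a * ξ / 2) ^ 2) * (a / 2)))) * (a / 2)) ξ := by
    have h3 : HasDerivAt (fun x => 1 - Real.tanh (a * x / 2) ^ 2)
        (-(2 * Real.tanh (a * ξ / 2) * ((1 - Real.tanh (a * ξ / 2) ^ 2) * (a / 2)))) ξ := by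
      have := ((inner_hasDerivAt a ξ).pow 2).const_sub 1
      refine this.congr_deriv ?_
      push_cast
      ring
    exact h3.mul_const (a / 2)
  have hF'' := (h1.mul h2).const_mul (2 * C)
  simp only [Pi.mul_apply] at hF''
  rw [← hderivF] at hF''
  rw [hF''.deriv, hderivF, hF ξ, hC]
  field_simp
  ring
end

section
/- Let a, b be real numbers with b ≠ 0, and define F(ξ) = (3a²/(2b)) (1 + coth(aξ/2))² for ξ with aξ ≠ 0. Then F satisfies F''(ξ) = b F(ξ)² − 6a² F(ξ) + 5a F'(ξ) at every point ξ with sinh(aξ/2) ≠ 0. -/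
/-- The real hyperbolic cotangent. -/
noncomputable def coth (x : ℝ) : ℝ := Real.cosh x / Real.sinh x

lemma coth_hasDerivAt (a x : ℝ) (h : Real.sinh (a * x / 2) ≠ 0) :
    HasDerivAt (fun y => coth (a * y / 2)) ((a / 2) * (1 - coth (a * x / 2) ^ 2)) x := by
  have hu : HasDerivAt (fun y : ℝ => a * y / 2) (a / 2) x := by
    simpa using ((hasDerivAt_id x).const_mul a).div_const 2
  have hc : HasDerivAt (fun y => Real.cosh (a * y / 2)) (Real.sinh (a * x / 2) * (a / 2)) x :=
    (Real.hasDerivAt_cosh _).comp x hu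
  have hs : HasDerivAt (fun y => Real.sinh (a * y / 2)) (Real.cosh (a * x / 2) * (a / 2)) x :=
    (Real.hasDerivAt_sinh _).comp x hu
  have hd := hc.div hs h
  refine hd.congr_deriv ?_
  unfold coth
  field_simp

lemma F_hasDerivAt (a b : ℝ) (F : ℝ → ℝ)
    (hF : ∀ ξ, F ξ = 3 * a ^ 2 / (2 * b) * (1 + coth (a * ξ / 2)) ^ 2)
    (x : ℝ) (h : Real.sinh (a * x / 2) ≠ 0) :
    HasDerivAt F (3 * a ^ 2 / (2 * b) *
      (2 * (1 + coth (a * x / 2)) * ((a / 2) * (1 - coth (a * x / 2) ^ 2)))) x := by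
  have hFe : F = fun ξ => 3 * a ^ 2 / (2 * b) * (1 + coth (a * ξ / 2)) ^ 2 := funext hF
  rw [hFe]
  have h1 := ((coth_hasDerivAt a x h).const_add 1).pow 2
  have h2 := h1.const_mul (3 * a ^ 2 / (2 * b))
  refine h2.congr_deriv ?_
  ring

theorem aux_ode_coth_solution
    (a b : ℝ) (hb : b ≠ 0) (F : ℝ → ℝ)
    (hF : ∀ ξ, F ξ = 3 * a ^ 2 / (2 * b) * (1 + coth (a * ξ / 2)) ^ 2)
    (ξ : ℝ) (hξ : Real.sinh (a * ξ / 2) ≠ 0) :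
    deriv (deriv F) ξ = b * F ξ ^ 2 - 6 * a ^ 2 * F ξ + 5 * a * deriv F ξ := by
  set G : ℝ → ℝ := fun x => 3 * a ^ 2 / (2 * b) *
      (2 * (1 + coth (a * x / 2)) * ((a / 2) * (1 - coth (a * x / 2) ^ 2))) with hG
  have hopen : IsOpen {x : ℝ | Real.sinh (a * x / 2) ≠ 0} := by
    have : Continuous fun x : ℝ => Real.sinh (a * x / 2) := by fun_prop
    exact isOpen_ne.preimage this
  have hmem : {x : ℝ | Real.sinh (a * x / 2) ≠ 0} ∈ nhds ξ :=
    hopen.mem_nhds hξ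
  have hev : deriv F =ᶠ[nhds ξ] G := by
    filter_upwards [hmem] with x hx
    exact (F_hasDerivAt a b F hF x hx).deriv
  -- derivative of G at ξ
  have hG' : HasDerivAt G (3 * a ^ 2 / (2 * b) *
      (2 * ((a / 2) * (1 - coth (a * ξ / 2) ^ 2)) * ((a / 2) * (1 - coth (a * ξ / 2) ^ 2))
        + 2 * (1 + coth (a * ξ / 2)) *
          ((a / 2) * (-(2 * coth (a * ξ / 2) * ((a / 2) * (1 - coth (a * ξ / 2) ^ 2))))))) ξ := by
    have ht := coth_hasDerivAt a ξ hξ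
    have h1 : HasDerivAt (fun x => 2 * (1 + coth (a * x / 2)))
        (2 * ((a / 2) * (1 - coth (a * ξ / 2) ^ 2))) ξ := (ht.const_add 1).const_mul 2
    have h2 : HasDerivAt (fun x => (a / 2) * (1 - coth (a * x / 2) ^ 2))
        ((a / 2) * (-(2 * coth (a * ξ / 2) * ((a / 2) * (1 - coth (a * ξ / 2) ^ 2))))) ξ := by
      have := ((ht.pow 2).const_sub 1).const_mul (a / 2)
      refine this.congr_deriv ?_
      ring
    have h3 := (h1.mul h2).const_mul (3 * a ^ 2 / (2 * b))
    exact h3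
  have key : deriv (deriv F) ξ = deriv G ξ := hev.deriv_eq
  rw [key, hG'.deriv, hev.self_of_nhds, hG, hF ξ]
  field_simp
  ring
end

section
/- Let a ∈ ℝ, ε = ±1, and define F(ξ) = (εa/2)(1 − coth(aξ/2)). Then F satisfies F''(ξ) = 2 F(ξ)³ − 2a² F(ξ) − 3a F'(ξ) at every point ξ with sinh(aξ/2) ≠ 0. -/
lemma coth_hasDerivAt_s8 (x : ℝ) (hx : Real.sinh x ≠ 0) :
    HasDerivAt coth (1 - coth x ^ 2) x := by
  have h := (Real.hasDerivAt_cosh x).div (Real.hasDerivAt_sinh x) hx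
  refine h.congr_deriv ?_
  have hc := Real.cosh_sq x
  unfold coth
  field_simp

theorem aux_ode2_coth_solution
    (a ε : ℝ) (hε : ε = 1 ∨ ε = -1) (F : ℝ → ℝ)
    (hF : ∀ ξ, F ξ = ε * a / 2 * (1 - coth (a * ξ / 2)))
    (ξ : ℝ) (hξ : Real.sinh (a * ξ / 2) ≠ 0) :
    deriv (deriv F) ξ = 2 * F ξ ^ 3 - 2 * a ^ 2 * F ξ - 3 * a * deriv F ξ := by
  set G : ℝ → ℝ := fun x => -(ε * a ^ 2 / 4) * (1 - coth (a * x / 2) ^ 2) with hG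
  -- inner function derivative
  have hinner : ∀ x : ℝ, HasDerivAt (fun y : ℝ => a * y / 2) (a / 2) x := by
    intro x
    simpa using ((hasDerivAt_id x).const_mul a).div_const 2
  have hFG : ∀ x : ℝ, Real.sinh (a * x / 2) ≠ 0 → HasDerivAt F (G x) x := by
    intro x hx
    have h1 : HasDerivAt (fun y => coth (a * y / 2))
        ((1 - coth (a * x / 2) ^ 2) * (a / 2)) x :=
      by have := (coth_hasDerivAt_s8 _ hx).comp x (hinner x); exact this
    have h2 : HasDerivAt (fun y => ε * a / 2 * (1 - coth (a * y / 2)))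
        (ε * a / 2 * (0 - (1 - coth (a * x / 2) ^ 2) * (a / 2))) x :=
      ((hasDerivAt_const x (1:ℝ)).sub h1).const_mul _
    have h3 : HasDerivAt F (ε * a / 2 * (0 - (1 - coth (a * x / 2) ^ 2) * (a / 2))) x := by
      refine h2.congr_of_eventuallyEq ?_
      filter_upwards with y using hF y
    convert h3 using 1
    simp [hG]; ring
  -- open set where sinh ≠ 0
  have hopen : IsOpen {x : ℝ | Real.sinh (a * x / 2) ≠ 0} := by
    have : Continuous fun x : ℝ => Real.sinh (a * x / 2) := by continuity
    exact isOpen_ne.preimage this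
  have hmem : {x : ℝ | Real.sinh (a * x / 2) ≠ 0} ∈ nhds ξ := hopen.mem_nhds hξ
  have hdF : deriv F =ᶠ[nhds ξ] G := by
    filter_upwards [hmem] with x hx using (hFG x hx).deriv
  have hdFξ : deriv F ξ = G ξ := (hFG ξ hξ).deriv
  -- derivative of G
  have hGd : HasDerivAt G (ε * a ^ 3 / 4 * (coth (a * ξ / 2) * (1 - coth (a * ξ / 2) ^ 2))) ξ := by
    have h1 : HasDerivAt (fun y => coth (a * y / 2))
        ((1 - coth (a * ξ / 2) ^ 2) * (a / 2)) ξ :=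
      by have := (coth_hasDerivAt_s8 _ hξ).comp ξ (hinner ξ); exact this
    have h2 : HasDerivAt (fun y => coth (a * y / 2) ^ 2)
        (2 * coth (a * ξ / 2) * ((1 - coth (a * ξ / 2) ^ 2) * (a / 2))) ξ := by
      exact (h1.pow 2).congr_deriv (by simp only [Nat.cast_ofNat]; ring)
    have h3 : HasDerivAt G (-(ε * a ^ 2 / 4) *
        (0 - 2 * coth (a * ξ / 2) * ((1 - coth (a * ξ / 2) ^ 2) * (a / 2)))) ξ :=
      ((hasDerivAt_const ξ (1:ℝ)).sub h2).const_mul _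
    convert h3 using 1
    ring
  have hdd : deriv (deriv F) ξ = ε * a ^ 3 / 4 * (coth (a * ξ / 2) * (1 - coth (a * ξ / 2) ^ 2)) := by
    rw [Filter.EventuallyEq.deriv_eq hdF]
    exact hGd.deriv
  rw [hdd, hdFξ, hF ξ]
  simp only [hG]
  rcases hε with h | h <;> subst h <;> ring
end

section
/- Suppose a₀, a₁, a, b, ω, λ, μ, ν are real numbers with a₁ ≠ 0, ν ≠ 0, λ ≠ 0, b ≠ 0 satisfying the system: 2bνa₁ + λa₁² = 0, −30a³νa₁ − 6a²μa₁ = 0, 5abνa₁ + bμa₁ = 0, and 19a²νa₁ + 5aμa₁ + λa₀a₁ + ωa₁ = 0. Then a = −μ/(5ν), a₁ = −2bν/λ, and a₀ = (6μ² − 25ων)/(25λν). -/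
theorem kdv_burgers_algebraic_system
    (a₀ a₁ a b ω lam mu nu : ℝ)
    (ha₁ : a₁ ≠ 0) (hnu : nu ≠ 0) (hlam : lam ≠ 0) (hb : b ≠ 0)
    (h1 : 2 * b * nu * a₁ + lam * a₁ ^ 2 = 0)
    (h2 : -30 * a ^ 3 * nu * a₁ - 6 * a ^ 2 * mu * a₁ = 0)
    (h3 : 5 * a * b * nu * a₁ + b * mu * a₁ = 0)
    (h4 : 19 * a ^ 2 * nu * a₁ + 5 * a * mu * a₁ + lam * a₀ * a₁ + ω * a₁ = 0) :
    a = -mu / (5 * nu) ∧ a₁ = -2 * b * nu / lam ∧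
      a₀ = (6 * mu ^ 2 - 25 * ω * nu) / (25 * lam * nu) := by
  have k3 : (5 * a * nu + mu) * (b * a₁) = 0 := by linear_combination h3
  have h3' : 5 * a * nu + mu = 0 :=
    (mul_eq_zero.mp k3).resolve_right (mul_ne_zero hb ha₁)
  have k1 : (2 * b * nu + lam * a₁) * a₁ = 0 := by linear_combination h1
  have h1' : 2 * b * nu + lam * a₁ = 0 := (mul_eq_zero.mp k1).resolve_right ha₁
  have k4 : (19 * a ^ 2 * nu + 5 * a * mu + lam * a₀ + ω) * a₁ = 0 := by
    linear_combination h4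
  have h4' : 19 * a ^ 2 * nu + 5 * a * mu + lam * a₀ + ω = 0 :=
    (mul_eq_zero.mp k4).resolve_right ha₁
  refine ⟨?_, ?_, ?_⟩
  · field_simp
    linarith
  · field_simp
    linarith
  · have hmu : mu = -(5 * a * nu) := by linarith
    subst hmu
    field_simp
    linear_combination 25 * h4'
end
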